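/- (Optimal energy-harvesting capacitance, Subsection IV-C.) Define g : (0, ∞) → ℝ by g(c) = (c/2) (1 − e^{−1/c})². Then g attains a global maximum on (0, ∞), and its maximizer c* lies in the interval (0.79, 0.80) (numerically c* ≈ 0.796); that is, there exists c* with 0.79 < c* < 0.80 such that g(c) ≤ g(c*) for all c > 0. -/

import Mathlib

open Real Set

noncomputable def harvestEff (c : ℝ) : ℝ := (c / 2) * (1 - Real.exp (-1 / c)) ^ 2

lemma exp_num1 : (3.5317 : ℝ) < Real.exp (100/79) := by
  have h := Real.sum_le_exp_of_nonneg (x := 100/79) (by norm_num) 6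
  refine lt_of_lt_of_le ?_ h
  simp [Finset.sum_range_succ, Nat.factorial]
  norm_num

lemma exp_num2 : Real.exp (5/4) < 3.5 := by
  have h5 : Real.exp (5/4) ^ 4 = Real.exp 5 := by
    rw [← Real.exp_nat_mul]; norm_num
  have h1 : Real.exp 5 = Real.exp 1 ^ 5 := by
    rw [← Real.exp_nat_mul]; norm_num
  have h2 : Real.exp 1 ^ 5 < 2.7182818286 ^ 5 := by
    exact pow_lt_pow_left₀ Real.exp_one_lt_d9 (Real.exp_pos 1).le (by norm_num)
  have h3 : Real.exp (5/4) ^ 4 < (3.5:ℝ) ^ 4 := by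
    rw [h5, h1]; nlinarith [h2]
  exact lt_of_pow_lt_pow_left₀ 4 (by norm_num) h3

lemma hasDerivAt_harvestEff {c : ℝ} (hc : c ≠ 0) :
    HasDerivAt harvestEff
      ((1 - Real.exp (-1/c))^2 / 2 - (1 - Real.exp (-1/c)) * Real.exp (-1/c) / c) c := by
  have h1 : HasDerivAt (fun x : ℝ => -1/x) (1/c^2) c := by
    have := (hasDerivAt_inv hc).fun_neg
    have heq : (fun x : ℝ => -1/x) = fun x : ℝ => -x⁻¹ := by
      funext x; rw [neg_div, one_div]
    rw [heq]
    refine this.congr_deriv ?_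
    rw [neg_neg, one_div]
  have h2 : HasDerivAt (fun x : ℝ => Real.exp (-1/x)) (Real.exp (-1/c) * (1/c^2)) c :=
    (Real.hasDerivAt_exp _).comp c h1
  have h3 : HasDerivAt (fun x : ℝ => 1 - Real.exp (-1/x))
      (-(Real.exp (-1/c) * (1/c^2))) c := by
    exact h2.const_sub 1
  have h4 := h3.pow 2
  have h5 : HasDerivAt (fun x : ℝ => x / 2) (1/2) c := by
    simpa using (hasDerivAt_id c).div_const 2
  have h6 := h5.mul h4
  have heq : harvestEff = fun x : ℝ => (x/2) * (1 - Real.exp (-1/x))^2 := rfl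
  rw [heq]
  refine h6.congr_deriv ?_
  simp only [Pi.pow_apply]
  field_simp
  ring

/-- existence of the critical point -/
lemma exists_root : ∃ cstar : ℝ, 0.79 < cstar ∧ cstar < 0.80 ∧
    Real.exp (1/cstar) = 1 + 2/cstar := by
  set φ : ℝ → ℝ := fun c => Real.exp (1/c) - 1 - 2/c with hφ
  have hcont : ContinuousOn φ (Icc 0.79 0.80) := by
    have hne : ∀ x ∈ Icc (0.79:ℝ) 0.80, x ≠ 0 := by
      intro x hx; have := hx.1; norm_num at this ⊢; linarith
    have h1 : ContinuousOn (fun x : ℝ => 1/x) (Icc 0.79 0.80) :=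
      continuousOn_const.div continuousOn_id hne
    have h2 : ContinuousOn (fun x : ℝ => 2/x) (Icc 0.79 0.80) :=
      continuousOn_const.div continuousOn_id hne
    exact ((Real.continuous_exp.comp_continuousOn h1).sub continuousOn_const).sub h2
  have hA : 0 < φ 0.79 := by
    have : (1:ℝ)/0.79 = 100/79 := by norm_num
    simp only [hφ, this]
    have := exp_num1
    have h2 : (2:ℝ)/0.79 = 200/79 := by norm_num
    rw [h2]
    nlinarith [exp_num1]
  have hB : φ 0.80 < 0 := by
    have h1 : (1:ℝ)/0.80 = 5/4 := by norm_num
    have h2 : (2:ℝ)/0.80 = 5/2 := by norm_num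
    simp only [hφ, h1, h2]
    nlinarith [exp_num2]
  have hsub := intermediate_value_Icc' (by norm_num : (0.79:ℝ) ≤ 0.80) hcont
  have h0 : (0:ℝ) ∈ Icc (φ 0.80) (φ 0.79) := ⟨hB.le, hA.le⟩
  obtain ⟨cstar, hmem, hval⟩ := hsub h0
  refine ⟨cstar, ?_, ?_, ?_⟩
  · rcases eq_or_lt_of_le hmem.1 with h | h
    · exfalso; rw [← h] at hval; rw [← hval] at hA; exact lt_irrefl _ hA
    · exact h
  · rcases eq_or_lt_of_le hmem.2 with h | h
    · exfalso; rw [h] at hval; rw [← hval] at hB; exact lt_irrefl _ hB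
    · exact h
  · have : Real.exp (1/cstar) - 1 - 2/cstar = 0 := hval
    linarith

/-- Optimal energy-harvesting capacitance (Subsection IV-C): the efficiency
`g(c) = (c/2)(1 − e^{−1/c})²` attains a global maximum over `c > 0`, and the maximizer
lies in the interval `(0.79, 0.80)` (numerically `c* ≈ 0.796`). -/
theorem harvestEff_max :
    ∃ cstar : ℝ, 0.79 < cstar ∧ cstar < 0.80 ∧
      ∀ c : ℝ, 0 < c → harvestEff c ≤ harvestEff cstar := by
  obtain ⟨cstar, h79, h80, hroot⟩ := exists_root
  have hcpos : (0:ℝ) < cstar := by norm_num at h79; linarith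
  have hx0 : (5/4 : ℝ) ≤ 1/cstar := by
    rw [le_div_iff₀ hcpos]
    norm_num at h80 ⊢
    linarith
  -- fact A : for 0 < c ≤ cstar, 1 + 2/c ≤ exp (1/c)
  have factA : ∀ c : ℝ, 0 < c → c ≤ cstar → 1 + 2/c ≤ Real.exp (1/c) := by
    intro c hc hle
    have hx : 1/cstar ≤ 1/c := by
      apply div_le_div_of_nonneg_left (by norm_num) hc hle
    set x0 := 1/cstar
    set x := 1/c with hxdef
    have hsplit : Real.exp x = Real.exp x0 * Real.exp (x - x0) := by
      rw [← Real.exp_add]; ring_nf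
    have h1 : 1 + (x - x0) ≤ Real.exp (x - x0) := by
      linarith [Real.add_one_le_exp (x - x0)]
    have h2 : Real.exp x0 * (1 + (x - x0)) ≤ Real.exp x0 * Real.exp (x - x0) := by
      apply mul_le_mul_of_nonneg_left h1 (Real.exp_pos _).le
    have h3 : Real.exp x0 = 1 + 2 * x0 := by rw [hroot]; ring
    have hgoal : 1 + 2 * x ≤ Real.exp x := by
      rw [hsplit]
      nlinarith [h2, h3, hx0, hx]
    calc 1 + 2/c = 1 + 2 * x := by rw [hxdef]; ring
      _ ≤ Real.exp x := hgoal
  -- fact B : for cstar ≤ c, exp (1/c) ≤ 1 + 2/c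
  have factB : ∀ c : ℝ, cstar ≤ c → Real.exp (1/c) ≤ 1 + 2/c := by
    intro c hle
    have hc : 0 < c := lt_of_lt_of_le hcpos hle
    have hx : 1/c ≤ 1/cstar := by
      apply div_le_div_of_nonneg_left (by norm_num) hcpos hle
    set x0 := 1/cstar with hx0def
    set x := 1/c with hxdef
    have hxpos : 0 < x := by positivity
    have hx0pos : (0:ℝ) < x0 := by positivity
    set t := x / x0 with htdef
    have ht0 : 0 ≤ t := by positivity
    have ht1 : t ≤ 1 := by
      rw [htdef, div_le_one hx0pos]; exact hx
    have hconv := convexOn_exp.2 (Set.mem_univ (0:ℝ)) (Set.mem_univ x0)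
      (by linarith : (0:ℝ) ≤ 1 - t) ht0 (by ring)
    have hxeq : (1 - t) • (0:ℝ) + t • x0 = x := by
      simp [smul_eq_mul, htdef]
      field_simp
    rw [hxeq] at hconv
    have h3 : Real.exp x0 = 1 + 2 * x0 := by rw [hroot]; ring
    have htx : t * x0 = x := by rw [htdef]; field_simp
    have : Real.exp x ≤ 1 + 2 * x := by
      have := hconv
      simp [smul_eq_mul, Real.exp_zero, h3] at this
      nlinarith [this, htx]
    calc Real.exp x ≤ 1 + 2 * x := this
      _ = 1 + 2/c := by rw [hxdef]; ring
  -- derivative sign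
  have derivA : ∀ c : ℝ, 0 < c → c ≤ cstar → 0 ≤ deriv harvestEff c := by
    intro c hc hle
    rw [(hasDerivAt_harvestEff hc.ne').deriv]
    set u := Real.exp (-1/c) with hu
    have hupos : 0 < u := Real.exp_pos _
    have huinv : u * Real.exp (1/c) = 1 := by
      rw [hu, ← Real.exp_add]; ring_nf; exact Real.exp_zero
    have h1 : u * (1 + 2/c) ≤ 1 := by
      calc u * (1 + 2/c) ≤ u * Real.exp (1/c) :=
            mul_le_mul_of_nonneg_left (factA c hc hle) hupos.le
        _ = 1 := huinv
    have h2 : u * c + 2 * u ≤ c := by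
      have := mul_le_mul_of_nonneg_right h1 hc.le
      have hexp : u * (1 + 2/c) * c = u * c + 2 * u := by field_simp
      linarith [hexp ▸ this]
    have hu1 : u ≤ 1 := by nlinarith
    rw [sub_nonneg, div_le_div_iff₀ hc (by norm_num : (0:ℝ) < 2)]
    have hfac : 0 ≤ (1-u) * (c - u*c - 2*u) :=
      mul_nonneg (by linarith) (by linarith)
    nlinarith [hfac]
  have derivB : ∀ c : ℝ, cstar < c → deriv harvestEff c ≤ 0 := by
    intro c hlt
    have hc : 0 < c := lt_trans hcpos hlt
    rw [(hasDerivAt_harvestEff hc.ne').deriv]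
    set u := Real.exp (-1/c) with hu
    have hupos : 0 < u := Real.exp_pos _
    have huinv : u * Real.exp (1/c) = 1 := by
      rw [hu, ← Real.exp_add]; ring_nf; exact Real.exp_zero
    have h1 : 1 ≤ u * (1 + 2/c) := by
      calc (1:ℝ) = u * Real.exp (1/c) := huinv.symm
        _ ≤ u * (1 + 2/c) := mul_le_mul_of_nonneg_left (factB c hlt.le) hupos.le
    have h2 : c ≤ u * c + 2 * u := by
      have := mul_le_mul_of_nonneg_right h1 hc.le
      have hexp : u * (1 + 2/c) * c = u * c + 2 * u := by field_simp
      linarith [hexp ▸ this]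
    have hu1 : u ≤ 1 := by
      rw [hu]
      have hneg : -1/c ≤ 0 := by
        rw [neg_div]; exact neg_nonpos.mpr (by positivity)
      simpa using Real.exp_le_exp.mpr hneg
    rw [sub_nonpos, div_le_div_iff₀ (by norm_num : (0:ℝ) < 2) hc]
    have hfac : (1-u) * (c - u*c - 2*u) ≤ 0 :=
      mul_nonpos_of_nonneg_of_nonpos (by linarith) (by linarith)
    nlinarith [hfac]
  -- continuity/differentiability on Ioi 0
  have hdiff : ∀ x : ℝ, 0 < x → DifferentiableAt ℝ harvestEff x :=
    fun x hx => (hasDerivAt_harvestEff hx.ne').differentiableAt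
  have monoA : MonotoneOn harvestEff (Ioc 0 cstar) := by
    apply monotoneOn_of_deriv_nonneg (convex_Ioc 0 cstar)
    · intro x hx
      exact (hdiff x hx.1).continuousAt.continuousWithinAt
    · rw [interior_Ioc]
      intro x hx
      exact (hdiff x hx.1).differentiableWithinAt
    · rw [interior_Ioc]
      intro x hx
      exact derivA x hx.1 hx.2.le
  have antiB : AntitoneOn harvestEff (Ici cstar) := by
    apply antitoneOn_of_deriv_nonpos (convex_Ici cstar)
    · intro x hx
      exact (hdiff x (lt_of_lt_of_le hcpos hx)).continuousAt.continuousWithinAt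
    · rw [interior_Ici]
      intro x hx
      exact (hdiff x (lt_trans hcpos hx)).differentiableWithinAt
    · rw [interior_Ici]
      intro x hx
      exact derivB x hx
  refine ⟨cstar, h79, h80, fun c hc => ?_⟩
  rcases le_total c cstar with h | h
  · exact monoA ⟨hc, h⟩ ⟨hcpos, le_refl _⟩ h
  · exact antiB (self_mem_Ici) h h
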